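/- arXiv:1404.6732 — 3 statements merged into one kernel-verified Lean document; each statement's English description precedes it below -/
import Mathlib

section
/- For distinct x, y ∈ (0, π/2), the logarithmic mean of sin x and sin y satisfies L(sin x, sin y) ≤ sin(L(x, y)). -/
noncomputable def logMean (a b : ℝ) : ℝ := (a - b) / (Real.log a - Real.log b)

open Real Set

private lemma integral_exp_affine (c d : ℝ) (hd : d ≠ 0) :
    ∫ l in (0:ℝ)..1, Real.exp (c + l * d) = (Real.exp (c + d) - Real.exp c) / d := by
  have h : ∀ l : ℝ, HasDerivAt (fun l : ℝ => Real.exp (c + l * d) / d)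
      (Real.exp (c + l * d)) l := by
    intro l
    have h1 : HasDerivAt (fun l : ℝ => c + l * d) d l := by
      simpa using ((hasDerivAt_id l).mul_const d).const_add c
    have h2 := (h1.exp).div_const d
    simpa [mul_div_assoc, mul_div_cancel_right₀, hd] using h2
  have hint : IntervalIntegrable (fun l : ℝ => Real.exp (c + l * d))
      MeasureTheory.volume 0 1 :=
    (Real.continuous_exp.comp (by continuity)).intervalIntegrable 0 1
  rw [intervalIntegral.integral_eq_sub_of_hasDerivAt (fun l _ => h l) hint]
  norm_num
  ring

private lemma sin_tangent {v m : ℝ} (hv : v ∈ Set.Icc 0 π) (hm : m ∈ Set.Icc 0 π) :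
    Real.sin v ≤ Real.sin m + Real.cos m * (v - m) := by
  have hconc : ConcaveOn ℝ (Set.Icc 0 π) Real.sin := strictConcaveOn_sin_Icc.concaveOn
  rcases lt_trichotomy v m with h | h | h
  · have := hconc.le_slope_of_hasDerivAt hv hm h (Real.hasDerivAt_sin m)
    rw [slope_def_field] at this
    have hvm : (0:ℝ) < m - v := by linarith
    rw [le_div_iff₀ hvm] at this; nlinarith
  · subst h; simp
  · have := hconc.slope_le_of_hasDerivAt hm hv h (Real.hasDerivAt_sin m)
    rw [slope_def_field] at this
    have hvm : (0:ℝ) < v - m := by linarith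
    rw [div_le_iff₀ hvm] at this
    nlinarith

private lemma concave_lse :
    ConcaveOn ℝ (Set.Iio (Real.log (π/2))) (fun u => Real.log (Real.sin (Real.exp u))) := by
  have hpi : (0:ℝ) < π/2 := by positivity
  have hmem : ∀ u ∈ Set.Iio (Real.log (π/2)),
      0 < Real.exp u ∧ Real.exp u < π/2 ∧ 0 < Real.sin (Real.exp u) := by
    intro u hu
    have h1 : Real.exp u < π/2 := by
      calc Real.exp u < Real.exp (Real.log (π/2)) := Real.exp_lt_exp.2 hu
        _ = π/2 := Real.exp_log hpi
    exact ⟨Real.exp_pos u, h1,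
      Real.sin_pos_of_pos_of_lt_pi (Real.exp_pos u) (by linarith [Real.pi_gt_three])⟩
  have hD : Convex ℝ (Set.Iio (Real.log (π/2))) := convex_Iio _
  have hint : interior (Set.Iio (Real.log (π/2))) = Set.Iio (Real.log (π/2)) :=
    interior_Iio
  refine concaveOn_of_hasDerivWithinAt2_nonpos hD
    (f' := fun u => Real.exp u * Real.cos (Real.exp u) / Real.sin (Real.exp u))
    (f'' := fun u => ((Real.exp u * Real.cos (Real.exp u)
        - Real.exp u * Real.exp u * Real.sin (Real.exp u)) * Real.sin (Real.exp u)
        - Real.exp u * Real.cos (Real.exp u) * (Real.cos (Real.exp u) * Real.exp u))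
        / (Real.sin (Real.exp u))^2)
    ?_ ?_ ?_ ?_
  · intro u hu
    obtain ⟨h0, h1, h2⟩ := hmem u hu
    have : ContinuousAt (fun u => Real.log (Real.sin (Real.exp u))) u :=
      ContinuousAt.log (by fun_prop) h2.ne'
    exact this.continuousWithinAt
  · intro u hu
    rw [hint] at hu
    obtain ⟨h0, h1, h2⟩ := hmem u hu
    have hs : HasDerivAt (fun u => Real.sin (Real.exp u))
        (Real.cos (Real.exp u) * Real.exp u) u :=
      (Real.hasDerivAt_sin (Real.exp u)).comp u (Real.hasDerivAt_exp u)
    have hl : HasDerivAt (fun u => Real.log (Real.sin (Real.exp u)))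
        ((Real.sin (Real.exp u))⁻¹ * (Real.cos (Real.exp u) * Real.exp u)) u :=
      (Real.hasDerivAt_log h2.ne').comp (h := fun u => Real.sin (Real.exp u)) u hs
    have : (Real.sin (Real.exp u))⁻¹ * (Real.cos (Real.exp u) * Real.exp u)
        = Real.exp u * Real.cos (Real.exp u) / Real.sin (Real.exp u) := by
      field_simp
    rw [this] at hl
    exact hl.hasDerivWithinAt
  · intro u hu
    rw [hint] at hu
    obtain ⟨h0, h1, h2⟩ := hmem u hu
    have hN : HasDerivAt (fun u => Real.exp u * Real.cos (Real.exp u))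
        (Real.exp u * Real.cos (Real.exp u)
          - Real.exp u * Real.exp u * Real.sin (Real.exp u)) u := by
      have hc : HasDerivAt (fun u => Real.cos (Real.exp u))
          (-Real.sin (Real.exp u) * Real.exp u) u :=
        (Real.hasDerivAt_cos (Real.exp u)).comp u (Real.hasDerivAt_exp u)
      have := (Real.hasDerivAt_exp u).mul hc
      exact this.congr_deriv (by ring)
    have hs : HasDerivAt (fun u => Real.sin (Real.exp u))
        (Real.cos (Real.exp u) * Real.exp u) u :=
      (Real.hasDerivAt_sin (Real.exp u)).comp u (Real.hasDerivAt_exp u)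
    exact (hN.div hs h2.ne').hasDerivWithinAt
  · intro u hu
    rw [hint] at hu
    obtain ⟨h0, h1, h2⟩ := hmem u hu
    have hkey : Real.sin (Real.exp u) * Real.cos (Real.exp u) ≤ Real.exp u := by
      have hsle : Real.sin (Real.exp u) ≤ Real.exp u := Real.sin_le h0.le
      nlinarith [Real.cos_le_one (Real.exp u), h2]
    have hnum : (Real.exp u * Real.cos (Real.exp u)
        - Real.exp u * Real.exp u * Real.sin (Real.exp u)) * Real.sin (Real.exp u)
        - Real.exp u * Real.cos (Real.exp u) * (Real.cos (Real.exp u) * Real.exp u)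
        = Real.exp u * (Real.sin (Real.exp u) * Real.cos (Real.exp u) - Real.exp u)
          - Real.exp u * Real.exp u *
            ((Real.sin (Real.exp u))^2 + (Real.cos (Real.exp u))^2 - 1) := by
      ring
    apply div_nonpos_of_nonpos_of_nonneg _ (sq_nonneg _)
    rw [hnum, Real.sin_sq_add_cos_sq]
    nlinarith

private lemma logMean_comm (a b : ℝ) : logMean a b = logMean b a := by
  unfold logMean
  rw [← neg_sub (Real.log b) (Real.log a), ← neg_sub b a, neg_div_neg_eq]

private lemma logMean_key (x y : ℝ) (hx : x ∈ Set.Ioo 0 (π / 2))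
    (hy : y ∈ Set.Ioo 0 (π / 2)) (h : y < x) :
    logMean (Real.sin x) (Real.sin y) ≤ Real.sin (logMean x y) := by
  obtain ⟨hy0, hy2⟩ := hy
  obtain ⟨hx0, hx2⟩ := hx
  have hpi2 : π/2 < π := by linarith [Real.pi_pos]
  set t := Real.log y with ht
  set s := Real.log x with hs
  have hts : t < s := Real.log_lt_log hy0 h
  set d := s - t with hd
  have hd0 : 0 < d := sub_pos.2 hts
  have het : Real.exp t = y := Real.exp_log hy0
  have hes : Real.exp s = x := Real.exp_log hx0
  have htD : t < Real.log (π/2) := Real.log_lt_log hy0 hy2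
  have hsD : s < Real.log (π/2) := Real.log_lt_log hx0 hx2
  have hsy : 0 < Real.sin y := Real.sin_pos_of_pos_of_lt_pi hy0 (by linarith)
  have hsx : 0 < Real.sin x := Real.sin_pos_of_pos_of_lt_pi hx0 (by linarith)
  have hsyx : Real.sin y < Real.sin x :=
    Real.strictMonoOn_sin ⟨by linarith, hy2.le⟩ ⟨by linarith, hx2.le⟩ h
  set a := Real.log (Real.sin y) with ha
  set b := Real.log (Real.sin x) with hb
  have hab : a < b := Real.log_lt_log hsy hsyx
  have hea : Real.exp a = Real.sin y := Real.exp_log hsy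
  have heb : Real.exp b = Real.sin x := Real.exp_log hsx
  set m := logMean x y with hm
  have hmval : m = (x - y) / (s - t) := rfl
  -- m as an integral
  have hI : (∫ l in (0:ℝ)..1, Real.exp (t + l * d)) = m := by
    rw [integral_exp_affine t d hd0.ne']
    rw [show t + d = s by rw [hd]; ring, het, hes, hmval, hd]
  -- bounds on m
  have hxy0 : 0 < x - y := by linarith
  have hmy : y ≤ m := by
    have h1 : s - t ≤ (x - y)/y := by
      have h2 := Real.log_le_sub_one_of_pos (show (0:ℝ) < x/y by positivity)
      rw [Real.log_div hx0.ne' hy0.ne'] at h2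
      rw [ht, hs]
      have : x / y - 1 = (x - y)/y := by field_simp
      linarith [this ▸ h2]
    rw [hmval, le_div_iff₀ (by linarith : (0:ℝ) < s - t)]
    calc y * (s - t) ≤ y * ((x - y)/y) := by
          apply mul_le_mul_of_nonneg_left h1 hy0.le
      _ = x - y := by field_simp
  have hmx : m ≤ x := by
    have h1 : (x - y)/x ≤ s - t := by
      have h2 := Real.log_le_sub_one_of_pos (show (0:ℝ) < y/x by positivity)
      rw [Real.log_div hy0.ne' hx0.ne'] at h2
      rw [ht, hs]
      have : y / x - 1 = (y - x)/x := by field_simp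
      rw [this] at h2
      have h3 : -((y - x)/x) = (x - y)/x := by ring
      linarith [neg_le_neg h2, h3]
    rw [hmval, div_le_iff₀ (by linarith : (0:ℝ) < s - t)]
    calc x - y = x * ((x - y)/x) := by field_simp
      _ ≤ x * (s - t) := by apply mul_le_mul_of_nonneg_left h1 hx0.le
  have hmIcc : m ∈ Set.Icc 0 π := ⟨by linarith, by linarith⟩
  -- pointwise inequality 1 (concavity of log ∘ sin ∘ exp)
  have hpt1 : ∀ l ∈ Set.Icc (0:ℝ) 1,
      Real.exp (a + l * (b - a)) ≤ Real.sin (Real.exp (t + l * d)) := by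
    intro l hl
    obtain ⟨hl0, hl1⟩ := hl
    have hw : (1 - l) * t + l * s = t + l * d := by rw [hd]; ring
    have hwle : t + l * d ≤ s := by nlinarith
    have hwD : t + l * d < Real.log (π/2) := by linarith
    have hcc := concave_lse.2 (Set.mem_Iio.2 htD) (Set.mem_Iio.2 hsD)
        (by linarith : (0:ℝ) ≤ 1 - l) hl0 (by ring)
    simp only [smul_eq_mul] at hcc
    rw [het, hes, hw] at hcc
    rw [← ha, ← hb] at hcc
    have hsinw : 0 < Real.sin (Real.exp (t + l * d)) := by
      apply Real.sin_pos_of_pos_of_lt_pi (Real.exp_pos _)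
      have h4 := Real.exp_lt_exp.2 hwD
      rw [Real.exp_log (by positivity : (0:ℝ) < π/2)] at h4
      linarith
    calc Real.exp (a + l * (b - a))
        = Real.exp ((1 - l) * a + l * b) := by rw [show a + l*(b-a) = (1-l)*a + l*b by ring]
      _ ≤ Real.exp (Real.log (Real.sin (Real.exp (t + l * d)))) := Real.exp_le_exp.2 hcc
      _ = Real.sin (Real.exp (t + l * d)) := Real.exp_log hsinw
  -- pointwise inequality 2 (tangent line)
  have hpt2 : ∀ l ∈ Set.Icc (0:ℝ) 1,
      Real.sin (Real.exp (t + l * d)) ≤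
        Real.sin m + Real.cos m * (Real.exp (t + l * d) - m) := by
    intro l hl
    obtain ⟨hl0, hl1⟩ := hl
    apply sin_tangent _ hmIcc
    refine ⟨(Real.exp_pos _).le, ?_⟩
    have hwle : t + l * d ≤ s := by nlinarith
    have h4 := Real.exp_le_exp.2 hwle
    rw [hes] at h4
    linarith
  -- LHS as an integral
  have hba : b - a ≠ 0 := by linarith
  have hL : logMean (Real.sin x) (Real.sin y)
      = ∫ l in (0:ℝ)..1, Real.exp (a + l * (b - a)) := by
    rw [integral_exp_affine a (b - a) hba]
    rw [show a + (b - a) = b by ring, hea, heb]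
    rw [logMean, ← ha, ← hb]
  -- integrability
  have hc1 : Continuous fun l : ℝ => Real.exp (a + l * (b - a)) := by fun_prop
  have hc2 : Continuous fun l : ℝ => Real.sin (Real.exp (t + l * d)) := by fun_prop
  have hcf : Continuous fun l : ℝ => Real.exp (t + l * d) := by fun_prop
  have hc3 : Continuous fun l : ℝ =>
      Real.sin m + Real.cos m * (Real.exp (t + l * d) - m) := by fun_prop
  -- final computation of the third integral
  have hI3 : (∫ l in (0:ℝ)..1,
      (Real.sin m + Real.cos m * (Real.exp (t + l * d) - m))) = Real.sin m := by
    have hif : IntervalIntegrable (fun l : ℝ => Real.exp (t + l * d))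
        MeasureTheory.volume 0 1 := hcf.intervalIntegrable 0 1
    rw [intervalIntegral.integral_add (intervalIntegrable_const)
      (((hif.sub intervalIntegrable_const).const_mul _))]
    rw [intervalIntegral.integral_const_mul]
    rw [intervalIntegral.integral_sub hif intervalIntegrable_const]
    rw [hI, intervalIntegral.integral_const, intervalIntegral.integral_const]
    simp
  calc logMean (Real.sin x) (Real.sin y)
      = ∫ l in (0:ℝ)..1, Real.exp (a + l * (b - a)) := hL
    _ ≤ ∫ l in (0:ℝ)..1, Real.sin (Real.exp (t + l * d)) :=
        intervalIntegral.integral_mono_on zero_le_one (hc1.intervalIntegrable 0 1)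
          (hc2.intervalIntegrable 0 1) hpt1
    _ ≤ ∫ l in (0:ℝ)..1, (Real.sin m + Real.cos m * (Real.exp (t + l * d) - m)) :=
        intervalIntegral.integral_mono_on zero_le_one (hc2.intervalIntegrable 0 1)
          (hc3.intervalIntegrable 0 1) hpt2
    _ = Real.sin m := hI3

theorem stmt6 (x y : ℝ) (hx : x ∈ Set.Ioo 0 (π / 2)) (hy : y ∈ Set.Ioo 0 (π / 2))
    (hxy : x ≠ y) :
    logMean (Real.sin x) (Real.sin y) ≤ Real.sin (logMean x y) := by
  rcases hxy.lt_or_gt with h | h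
  · rw [logMean_comm, logMean_comm x y]
    exact logMean_key y x hy hx h
  · exact logMean_key x y hx hy h
end

section
/- For distinct x, y ∈ (0, 1), the logarithmic mean satisfies L(arcsinh x, arcsinh y) ≤ arcsinh((x+y)/2). -/
open Real

lemma arsinh_concave : ConcaveOn ℝ (Set.Ici (0:ℝ)) Real.arsinh := by
  have hderiv : ∀ z : ℝ, deriv Real.arsinh z = (√(1 + z ^ 2))⁻¹ := fun z =>
    (Real.hasDerivAt_arsinh z).deriv
  apply AntitoneOn.concaveOn_of_deriv (convex_Ici 0) Real.continuous_arsinh.continuousOn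
    (Real.differentiable_arsinh.differentiableOn)
  intro a ha b hb hab
  rw [interior_Ici] at ha hb
  rw [hderiv, hderiv]
  apply inv_anti₀
  · exact Real.sqrt_pos.2 (by positivity)
  · apply Real.sqrt_le_sqrt
    nlinarith [le_of_lt (Set.mem_Ioi.1 ha), le_of_lt (Set.mem_Ioi.1 hb)]

lemma logMean_le_am {a b : ℝ} (ha : 0 < a) (hab : a < b) :
    (b - a) / (Real.log b - Real.log a) ≤ (a + b) / 2 := by
  have hb : 0 < b := ha.trans hab
  have hlog : Real.log a < Real.log b := Real.log_lt_log ha hab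
  rw [div_le_div_iff₀ (by linarith) (by norm_num)]
  -- suffices: 2*(b-a) ≤ (a+b)*(log b - log a)
  set f : ℝ → ℝ := fun t => (t + a) * (Real.log t - Real.log a) - 2 * (t - a) with hf
  have key : f a ≤ f b := by
    have hmono : MonotoneOn f (Set.Icc a b) := by
      apply monotoneOn_of_deriv_nonneg (convex_Icc a b)
      · apply ContinuousOn.sub
        · exact ContinuousOn.mul (by fun_prop) (ContinuousOn.sub
            (Real.continuousOn_log.mono (fun t ht => ne_of_gt (lt_of_lt_of_le ha ht.1)))
            continuousOn_const)
        · fun_prop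
      · rw [interior_Icc]
        intro t ht
        have hta : a < t := ht.1
        have htpos : 0 < t := ha.trans hta
        exact ((((hasDerivAt_id t).add_const a).mul
          ((Real.hasDerivAt_log htpos.ne').sub_const (Real.log a))).sub
          (((hasDerivAt_id t).sub_const a).const_mul 2)).differentiableAt.differentiableWithinAt
      · rw [interior_Icc]
        intro t ht
        have hta : a < t := ht.1
        have htpos : 0 < t := ha.trans hta
        have hD : HasDerivAt f (1 * (Real.log t - Real.log a) + (t + a) * t⁻¹ - 2 * 1) t := by
          exact (((hasDerivAt_id t).add_const a).mul
            ((Real.hasDerivAt_log htpos.ne').sub_const (Real.log a))).sub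
            (((hasDerivAt_id t).sub_const a).const_mul 2)
        rw [hD.deriv]
        have hlog2 : 1 - a / t ≤ Real.log t - Real.log a := by
          have := Real.log_le_sub_one_of_pos (show 0 < a / t by positivity)
          rw [Real.log_div ha.ne' htpos.ne'] at this
          linarith
        have : (t + a) * t⁻¹ = 1 + a / t := by field_simp
        rw [this]
        linarith
    exact hmono (Set.left_mem_Icc.2 hab.le) (Set.right_mem_Icc.2 hab.le) hab.le
  have hfa : f a = 0 := by simp [hf]
  rw [hfa] at key
  simp only [hf] at key
  nlinarith [key]

theorem stmt11 (x y : ℝ) (hx : x ∈ Set.Ioo (0:ℝ) 1) (hy : y ∈ Set.Ioo (0:ℝ) 1)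
    (hxy : x ≠ y) :
    logMean (Real.arsinh x) (Real.arsinh y) ≤ Real.arsinh ((x + y) / 2) := by
  wlog h : x < y generalizing x y
  · have := this y x hy hx hxy.symm (lt_of_le_of_ne (not_lt.1 h) hxy.symm)
    rw [add_comm y x] at this
    unfold logMean at this ⊢
    rw [show Real.arsinh x - Real.arsinh y = -(Real.arsinh y - Real.arsinh x) by ring,
      show Real.log (Real.arsinh x) - Real.log (Real.arsinh y)
        = -(Real.log (Real.arsinh y) - Real.log (Real.arsinh x)) by ring, neg_div_neg_eq]
    exact this
  have hax : 0 < Real.arsinh x := Real.arsinh_pos_iff.2 hx.1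
  have haxy : Real.arsinh x < Real.arsinh y := Real.arsinh_strictMono h
  have h1 : logMean (Real.arsinh x) (Real.arsinh y)
      = (Real.arsinh y - Real.arsinh x) / (Real.log (Real.arsinh y) - Real.log (Real.arsinh x)) := by
    unfold logMean
    rw [show Real.arsinh x - Real.arsinh y = -(Real.arsinh y - Real.arsinh x) by ring,
      show Real.log (Real.arsinh x) - Real.log (Real.arsinh y)
        = -(Real.log (Real.arsinh y) - Real.log (Real.arsinh x)) by ring, neg_div_neg_eq]
  rw [h1]
  have h2 := logMean_le_am hax haxy
  refine h2.trans ?_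
  -- concavity
  have hc := arsinh_concave.2 (Set.mem_Ici.2 hx.1.le) (Set.mem_Ici.2 hy.1.le)
    (by norm_num : (0:ℝ) ≤ 1/2) (by norm_num : (0:ℝ) ≤ 1/2) (by norm_num)
  simp only [smul_eq_mul] at hc
  have : (1/2 : ℝ) * x + (1/2 : ℝ) * y = (x + y) / 2 := by ring
  rw [this] at hc
  linarith
end

section
/- For distinct x, y ∈ (0, 1), the logarithmic mean satisfies L(arctan x, arctan y) ≤ arctan((x+y)/2). -/
open Real

private lemma aux_hasDeriv (t : ℝ) (ht : 0 < t) :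
    HasDerivAt (fun s : ℝ => Real.log s - 2*(s-1)/(s+1)) ((t-1)^2/(t*(t+1)^2)) t := by
  have h1 : HasDerivAt (fun s : ℝ => Real.log s) (1/t) t := by
    simpa [one_div] using Real.hasDerivAt_log (ne_of_gt ht)
  have hne : t + 1 ≠ 0 := by linarith
  have h2 : HasDerivAt (fun s : ℝ => 2*(s-1)/(s+1))
      ((2*1*(t+1) - 2*(t-1)*1)/((t+1)^2)) t := by
    exact HasDerivAt.div (((hasDerivAt_id t).sub_const 1).const_mul 2)
      ((hasDerivAt_id t).add_const 1) hne
  have := h1.fun_sub h2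
  refine this.congr_deriv ?_
  field_simp
  ring

private lemma key_log (t : ℝ) (ht : 1 < t) : 2*(t-1)/(t+1) ≤ Real.log t := by
  set f : ℝ → ℝ := fun s => Real.log s - 2*(s-1)/(s+1) with hf
  have hmono : MonotoneOn f (Set.Ici 1) := by
    apply monotoneOn_of_deriv_nonneg (convex_Ici 1)
    · apply ContinuousOn.sub
      · exact fun s hs => (Real.continuousAt_log (by simp at hs; positivity)).continuousWithinAt
      · apply ContinuousOn.div (by fun_prop) (by fun_prop)
        intro s hs; simp at hs; nlinarith
    · intro s hs
      rw [interior_Ici] at hs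
      exact (aux_hasDeriv s (by simp at hs; linarith)).differentiableAt.differentiableWithinAt
    · intro s hs
      rw [interior_Ici] at hs
      simp only [Set.mem_Ioi] at hs
      have hs0 : 0 < s := by linarith
      rw [(aux_hasDeriv s hs0).deriv]
      positivity
  have h1 : f 1 = 0 := by simp [hf]
  have := hmono (Set.self_mem_Ici) (Set.mem_Ici.2 ht.le) ht.le
  rw [h1] at this
  simpa [hf, sub_nonneg] using this

private lemma arctan_concave : ConcaveOn ℝ (Set.Ici (0:ℝ)) Real.arctan := by
  apply StrictConcaveOn.concaveOn
  apply StrictAntiOn.strictConcaveOn_of_deriv (convex_Ici 0) Real.continuous_arctan.continuousOn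
  intro a ha b hb hab
  rw [interior_Ici] at ha hb
  simp only [Set.mem_Ioi] at ha hb
  rw [Real.deriv_arctan]
  have : 1 + a^2 < 1 + b^2 := by nlinarith
  apply div_lt_div_of_pos_left one_pos (by positivity) this

private lemma main_aux (x y : ℝ) (hx : x ∈ Set.Ioo (0:ℝ) 1) (hy : y ∈ Set.Ioo (0:ℝ) 1)
    (h : y < x) :
    logMean (Real.arctan x) (Real.arctan y) ≤ Real.arctan ((x + y) / 2) := by
  obtain ⟨hx0, hx1⟩ := hx
  obtain ⟨hy0, hy1⟩ := hy
  set a := Real.arctan x with ha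
  set b := Real.arctan y with hb
  have hb0 : 0 < b := by rw [hb, ← Real.arctan_zero]; exact Real.arctan_strictMono hy0
  have hba : b < a := Real.arctan_strictMono h
  have ha0 : 0 < a := lt_trans hb0 hba
  have hlog : Real.log b < Real.log a := Real.log_lt_log hb0 hba
  -- step 1 : logMean a b ≤ (a+b)/2
  have hstep1 : logMean a b ≤ (a + b) / 2 := by
    rw [logMean, div_le_iff₀ (by linarith)]
    have hk := key_log (a/b) ((one_lt_div hb0).2 hba)
    rw [Real.log_div (ne_of_gt ha0) (ne_of_gt hb0)] at hk
    have h2 : 2*(a/b-1)/(a/b+1) = 2*(a-b)/(a+b) := by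
      rw [div_eq_div_iff (by positivity) (by positivity)]
      field_simp
    rw [h2] at hk
    have := mul_le_mul_of_nonneg_left hk (by positivity : (0:ℝ) ≤ (a+b)/2)
    calc a - b = (a+b)/2 * (2*(a-b)/(a+b)) := by field_simp
    _ ≤ (a+b)/2 * (Real.log a - Real.log b) := this
  -- step 2 : (a+b)/2 ≤ arctan ((x+y)/2)
  have hstep2 : (a + b) / 2 ≤ Real.arctan ((x + y) / 2) := by
    have hc := arctan_concave.2 (Set.mem_Ici.2 hx0.le) (Set.mem_Ici.2 hy0.le)
      (by norm_num : (0:ℝ) ≤ 1/2) (by norm_num : (0:ℝ) ≤ 1/2) (by norm_num)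
    simp only [smul_eq_mul] at hc
    have : (1:ℝ)/2 * x + 1/2 * y = (x+y)/2 := by ring
    rw [this] at hc
    linarith
  linarith

theorem stmt12 (x y : ℝ) (hx : x ∈ Set.Ioo (0:ℝ) 1) (hy : y ∈ Set.Ioo (0:ℝ) 1)
    (hxy : x ≠ y) :
    logMean (Real.arctan x) (Real.arctan y) ≤ Real.arctan ((x + y) / 2) := by
  rcases hxy.lt_or_gt with h | h
  · have := main_aux y x hy hx h
    have hs : logMean (Real.arctan x) (Real.arctan y) = logMean (Real.arctan y) (Real.arctan x) := by
      rw [logMean, logMean, ← neg_div_neg_eq]; ring_nf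
    rw [hs, add_comm x y]
    exact this
  · exact main_aux x y hx hy h
end
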